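/- Let F be an (n,m)-function with F(0) = 0 such that for every μ ∈ 𝔽₂^m∖{0} the component μ·F is not affine. Let w_min and w_max denote the minimum and maximum Hamming weights of nonzero codewords of the binary linear code C_F. Then 2·w_min ≤ w_max (i.e. C_F violates the AB condition w_min/w_max > 1/2) if and only if 2·max{W_F(μ,ν) : μ ∈ 𝔽₂^m∖{0}, ν ∈ 𝔽₂ⁿ} − min{W_F(μ,ν) : μ ∈ 𝔽₂^m∖{0}, ν ∈ 𝔽₂ⁿ} ≥ 2ⁿ. -/

import Mathlib

def dotp {n : ℕ} (v x : Fin n → ZMod 2) : ZMod 2 := ∑ i, v i * x i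

def wht {n : ℕ} (f : (Fin n → ZMod 2) → ZMod 2) (ν : Fin n → ZMod 2) : ℤ :=
  ∑ x : Fin n → ZMod 2, (-1 : ℤ) ^ (f x + dotp ν x).val

def whtF {n m : ℕ} (F : (Fin n → ZMod 2) → (Fin m → ZMod 2))
    (μ : Fin m → ZMod 2) (ν : Fin n → ZMod 2) : ℤ :=
  wht (fun x => dotp μ (F x)) ν

def cw {n m : ℕ} (F : (Fin n → ZMod 2) → (Fin m → ZMod 2))
    (μ : Fin m → ZMod 2) (ν : Fin n → ZMod 2) :
    {x : Fin n → ZMod 2 // x ≠ 0} → ZMod 2 :=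
  fun x => dotp μ (F x.1) + dotp ν x.1

def codeF {n m : ℕ} (F : (Fin n → ZMod 2) → (Fin m → ZMod 2)) :
    Set ({x : Fin n → ZMod 2 // x ≠ 0} → ZMod 2) :=
  Set.range fun p : (Fin m → ZMod 2) × (Fin n → ZMod 2) => cw F p.1 p.2

def wt {n : ℕ} (c : {x : Fin n → ZMod 2 // x ≠ 0} → ZMod 2) : ℕ :=
  (Finset.univ.filter fun x => c x = 1).card

def IsMinimal {n : ℕ} (C : Set ({x : Fin n → ZMod 2 // x ≠ 0} → ZMod 2)) : Prop :=
  ∀ c ∈ C, ∀ c' ∈ C, c ≠ 0 → c' ≠ 0 →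
    {x | c' x = 1} ⊆ {x | c x = 1} → c' = c

def weights {n m : ℕ} (F : (Fin n → ZMod 2) → (Fin m → ZMod 2)) : Set ℕ :=
  {w | ∃ c ∈ codeF F, c ≠ 0 ∧ wt c = w}

lemma dotp_zero_right {n : ℕ} (v : Fin n → ZMod 2) : dotp v 0 = 0 := by simp [dotp]

lemma dotp_zero_left {n : ℕ} (x : Fin n → ZMod 2) : dotp 0 x = 0 := by simp [dotp]

lemma dotp_comm {n : ℕ} (v x : Fin n → ZMod 2) : dotp v x = dotp x v := by
  simp [dotp, mul_comm]

lemma dotp_add_right {n : ℕ} (v x y : Fin n → ZMod 2) :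
    dotp v (x + y) = dotp v x + dotp v y := by
  simp [dotp, mul_add, Finset.sum_add_distrib]

lemma dotp_single {n : ℕ} (v : Fin n → ZMod 2) (i : Fin n) :
    dotp v (Pi.single i 1) = v i := by
  simp [dotp, Pi.single_apply, Finset.sum_ite_eq]

lemma neg_one_pow_add (a b : ZMod 2) :
    (-1:ℤ)^((a+b).val) = (-1:ℤ)^a.val * (-1:ℤ)^b.val := by revert a b; decide

lemma char_sum {n : ℕ} (v : Fin n → ZMod 2) (hv : v ≠ 0) :
    ∑ x : Fin n → ZMod 2, (-1:ℤ)^((dotp v x).val) = 0 := by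
  obtain ⟨i, hi⟩ : ∃ i, v i ≠ 0 := by
    by_contra h; push_neg at h; exact hv (funext fun i => h i)
  have hvi : v i = 1 := by
    have : ∀ a : ZMod 2, a ≠ 0 → a = 1 := by decide
    exact this _ hi
  apply Finset.sum_ninvolution (fun x => x + Pi.single i 1)
  · intro a
    rw [dotp_add_right, dotp_single, hvi, neg_one_pow_add]
    have : ((-1:ℤ))^((1:ZMod 2)).val = -1 := by decide
    rw [this]; ring
  · intro a _
    intro h
    have := congrFun h i
    simp at this
  · intro a; exact Finset.mem_univ _
  · intro a; funext j; by_cases hj : j = i <;> simp [hj, add_assoc] <;> decide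

lemma card_funspace (n : ℕ) : Fintype.card (Fin n → ZMod 2) = 2^n := by
  simp [Fintype.card_fun]

lemma wht_eq {n : ℕ} (f : (Fin n → ZMod 2) → ZMod 2) (ν : Fin n → ZMod 2) :
    wht f ν = 2^n - 2 * ((Finset.univ.filter fun x : Fin n → ZMod 2 => f x + dotp ν x = 1).card : ℤ) := by
  have h1 : ∀ a : ZMod 2, (-1:ℤ)^a.val = 1 - 2 * (if a = 1 then (1:ℤ) else 0) := by decide
  unfold wht
  rw [Finset.sum_congr rfl fun x _ => h1 (f x + dotp ν x)]
  rw [Finset.sum_sub_distrib, Finset.sum_const, ← Finset.mul_sum, Finset.sum_boole]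
  simp [Finset.card_univ, card_funspace]

lemma wt_eq_card {n m : ℕ} (F : (Fin n → ZMod 2) → (Fin m → ZMod 2)) (h0 : F 0 = 0)
    (μ : Fin m → ZMod 2) (ν : Fin n → ZMod 2) :
    wt (cw F μ ν) = (Finset.univ.filter fun x : Fin n → ZMod 2 => dotp μ (F x) + dotp ν x = 1).card := by
  rw [wt]
  apply Finset.card_bij (fun x _ => x.1)
  · intro a ha
    simp [cw] at ha ⊢
    simpa [cw] using (Finset.mem_filter.mp ha).2
  · intro a _ b _ h; exact Subtype.ext h
  · intro b hb
    simp at hb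
    have hb0 : b ≠ 0 := by
      rintro rfl
      rw [h0, dotp_zero_right, dotp_zero_right] at hb
      simp at hb
    exact ⟨⟨b, hb0⟩, Finset.mem_filter.mpr ⟨Finset.mem_univ _, by simp [cw, hb]⟩, rfl⟩

lemma whtF_eq {n m : ℕ} (F : (Fin n → ZMod 2) → (Fin m → ZMod 2)) (h0 : F 0 = 0)
    (μ : Fin m → ZMod 2) (ν : Fin n → ZMod 2) :
    whtF F μ ν = 2^n - 2 * (wt (cw F μ ν) : ℤ) := by
  rw [whtF, wht_eq, wt_eq_card F h0]

lemma sum_whtF {n m : ℕ} (F : (Fin n → ZMod 2) → (Fin m → ZMod 2)) (h0 : F 0 = 0)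
    (μ : Fin m → ZMod 2) :
    ∑ ν : Fin n → ZMod 2, whtF F μ ν = 2^n := by
  unfold whtF wht
  rw [Finset.sum_comm]
  have step1 : ∀ x : Fin n → ZMod 2,
      ∑ ν : Fin n → ZMod 2, (-1:ℤ)^((dotp μ (F x) + dotp ν x).val)
        = (-1:ℤ)^((dotp μ (F x)).val) * ∑ ν : Fin n → ZMod 2, (-1:ℤ)^((dotp ν x).val) := by
    intro x; rw [Finset.mul_sum]; exact Finset.sum_congr rfl fun ν _ => neg_one_pow_add _ _
  have hin : ∀ x : Fin n → ZMod 2,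
      (∑ ν : Fin n → ZMod 2, (-1:ℤ)^((dotp ν x).val)) = if x = 0 then 2^n else 0 := by
    intro x
    by_cases hx : x = 0
    · subst hx
      simp [dotp_zero_right, Finset.card_univ, card_funspace]
    · rw [if_neg hx, ← char_sum x hx]
      exact Finset.sum_congr rfl fun ν _ => by rw [dotp_comm]
  rw [Finset.sum_congr rfl fun x _ => by rw [step1 x, hin x]]
  rw [Finset.sum_eq_single 0]
  · simp [h0, dotp_zero_right]
  · intro b _ hb; simp [hb]
  · simp

theorem stmt8 (n m : ℕ) (F : (Fin n → ZMod 2) → (Fin m → ZMod 2))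
    (h0 : F 0 = 0)
    (hna : ∀ μ : Fin m → ZMod 2, μ ≠ 0 →
      ¬ ∃ (ν : Fin n → ZMod 2) (ε : ZMod 2), ∀ x, dotp μ (F x) = dotp ν x + ε)
    (wmin wmax : ℕ)
    (hwmin : IsLeast (weights F) wmin) (hwmax : IsGreatest (weights F) wmax)
    (Wmax Wmin : ℤ)
    (hWmax : IsGreatest {w : ℤ | ∃ (μ : Fin m → ZMod 2) (ν : Fin n → ZMod 2),
      μ ≠ 0 ∧ whtF F μ ν = w} Wmax)
    (hWmin : IsLeast {w : ℤ | ∃ (μ : Fin m → ZMod 2) (ν : Fin n → ZMod 2),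
      μ ≠ 0 ∧ whtF F μ ν = w} Wmin) :
    2 * wmin ≤ wmax ↔ 2 ^ n ≤ 2 * Wmax - Wmin := by
  classical
  -- n ≥ 1
  have hn : 1 ≤ n := by
    by_contra hn
    have hn0 : n = 0 := by omega
    subst hn0
    obtain ⟨c, _, hc0, _⟩ := hwmin.1
    apply hc0
    funext x
    exact absurd (Subsingleton.elim x.1 0) x.2
  -- nonzero codewords for μ ≠ 0
  have cw_ne : ∀ (μ : Fin m → ZMod 2) (ν : Fin n → ZMod 2), μ ≠ 0 → cw F μ ν ≠ 0 := by
    intro μ ν hμ h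
    apply hna μ hμ
    refine ⟨ν, 0, fun x => ?_⟩
    rw [add_zero]
    by_cases hx : x = 0
    · subst hx; rw [h0, dotp_zero_right, dotp_zero_right]
    · have h' := congrFun h ⟨x, hx⟩
      simp only [cw, Pi.zero_apply] at h'
      have : ∀ a b : ZMod 2, a + b = 0 → a = b := by decide
      exact this _ _ h'
  obtain ⟨μ1, ν1, hμ1, hW1⟩ := hWmax.1
  obtain ⟨μ2, ν2, hμ2, hW2⟩ := hWmin.1
  -- Wmax ≥ 1
  have hWmaxpos : 1 ≤ Wmax := by
    have hsum := sum_whtF F h0 μ1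
    have hle : ∑ ν : Fin n → ZMod 2, whtF F μ1 ν ≤ ∑ _ν : Fin n → ZMod 2, Wmax :=
      Finset.sum_le_sum fun ν _ => hWmax.2 ⟨μ1, ν, hμ1, rfl⟩
    rw [hsum, Finset.sum_const, Finset.card_univ, card_funspace, nsmul_eq_mul] at hle
    push_cast at hle
    nlinarith [pow_pos (by norm_num : (0:ℤ) < 2) n]
  -- Wmin ≤ 0
  have hWminnonpos : Wmin ≤ 0 := by
    by_contra hc
    push_neg at hc
    have h2 : ∀ ν : Fin n → ZMod 2, 2 ≤ whtF F μ2 ν := by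
      intro ν
      have he := whtF_eq F h0 μ2 ν
      have hge : Wmin ≤ whtF F μ2 ν := hWmin.2 ⟨μ2, ν, hμ2, rfl⟩
      have hdvd : (2:ℤ) ∣ 2^n := dvd_pow_self 2 (by omega)
      omega
    have hsum := sum_whtF F h0 μ2
    have hle : ∑ _ν : Fin n → ZMod 2, (2:ℤ) ≤ ∑ ν : Fin n → ZMod 2, whtF F μ2 ν :=
      Finset.sum_le_sum fun ν _ => h2 ν
    rw [hsum, Finset.sum_const, Finset.card_univ, card_funspace, nsmul_eq_mul] at hle
    have : (2:ℤ) ≤ 2^n := by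
      have := pow_le_pow_right₀ (by norm_num : (1:ℤ) ≤ 2) hn
      simpa using this
    push_cast at hle
    nlinarith
  -- every weight w satisfies 2^n - Wmax ≤ 2w ≤ 2^n - Wmin
  have hbound : ∀ w ∈ weights F, 2^n - Wmax ≤ 2 * (w:ℤ) ∧ 2 * (w:ℤ) ≤ 2^n - Wmin := by
    rintro w ⟨c, ⟨⟨μ, ν⟩, rfl⟩, hc0, rfl⟩
    dsimp only at hc0 ⊢
    have he := whtF_eq F h0 μ ν
    by_cases hμ : μ = 0
    · subst hμ
      have hν : ν ≠ 0 := by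
        rintro rfl
        apply hc0
        funext x
        simp [cw, dotp_zero_left]
      have hz : whtF F 0 ν = 0 := by
        unfold whtF wht
        rw [← char_sum ν hν]
        exact Finset.sum_congr rfl fun x _ => by simp [dotp_zero_left]
      rw [hz] at he
      constructor <;> omega
    · have hle := hWmax.2 ⟨μ, ν, hμ, rfl⟩
      have hge := hWmin.2 ⟨μ, ν, hμ, rfl⟩
      constructor <;> omega
  -- achieved values
  have hB : (wt (cw F μ1 ν1)) ∈ weights F := ⟨cw F μ1 ν1, ⟨(μ1, ν1), rfl⟩, cw_ne μ1 ν1 hμ1, rfl⟩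
  have hC : (wt (cw F μ2 ν2)) ∈ weights F := ⟨cw F μ2 ν2, ⟨(μ2, ν2), rfl⟩, cw_ne μ2 ν2 hμ2, rfl⟩
  have he1 := whtF_eq F h0 μ1 ν1
  have he2 := whtF_eq F h0 μ2 ν2
  rw [hW1] at he1
  rw [hW2] at he2
  have hminB : wmin ≤ wt (cw F μ1 ν1) := hwmin.2 hB
  have hmaxC : wt (cw F μ2 ν2) ≤ wmax := hwmax.2 hC
  have hminlo := (hbound wmin hwmin.1).1
  have hmaxhi := (hbound wmax hwmax.1).2
  have emin : 2 * (wmin:ℤ) = 2^n - Wmax := by omega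
  have emax : 2 * (wmax:ℤ) = 2^n - Wmin := by omega
  constructor
  · intro h
    have : (2 * wmin : ℤ) ≤ (wmax : ℤ) := by exact_mod_cast h
    omega
  · intro h
    have : (2 * wmin : ℤ) ≤ (wmax : ℤ) := by omega
    exact_mod_cast this
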